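/- If V : [0,∞) → ℝ is a nonnegative, continuously differentiable function satisfying V'(t) ≤ -c₁·V(t)^{1/2} - c₂·V(t) for positive constants c₁, c₂, then V reaches zero in finite time; more precisely, V(t) = 0 for all t ≥ (2/c₂)·ln(1 + (c₂/c₁)·V(0)^{1/2}). -/

import Mathlib

theorem stmt_4 (c₁ c₂ : ℝ) (hc₁ : 0 < c₁) (hc₂ : 0 < c₂)
    (V V' : ℝ → ℝ)
    (hVnonneg : ∀ t, 0 ≤ t → 0 ≤ V t)
    (hderiv : ∀ t, 0 ≤ t → HasDerivAt V (V' t) t)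
    (hineq : ∀ t, 0 ≤ t → V' t ≤ -c₁ * Real.sqrt (V t) - c₂ * V t) :
    ∀ t, (2/c₂) * Real.log (1 + (c₂/c₁) * Real.sqrt (V 0)) ≤ t → V t = 0 := by
  set T : ℝ := (2/c₂) * Real.log (1 + (c₂/c₁) * Real.sqrt (V 0)) with hT
  have hVcont : ContinuousOn V (Set.Ici 0) := fun t ht =>
    (hderiv t ht).continuousAt.continuousWithinAt
  -- V is antitone on [0, ∞)
  have hanti : AntitoneOn V (Set.Ici 0) := by
    apply antitoneOn_of_deriv_nonpos (convex_Ici 0) hVcont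
    · intro x hx
      rw [interior_Ici] at hx
      exact ((hderiv x (le_of_lt hx)).differentiableAt).differentiableWithinAt
    · intro x hx
      rw [interior_Ici] at hx
      rw [(hderiv x (le_of_lt hx)).deriv]
      have h1 := hineq x (le_of_lt hx)
      have h2 : 0 ≤ Real.sqrt (V x) := Real.sqrt_nonneg _
      have h3 : 0 ≤ V x := hVnonneg x (le_of_lt hx)
      nlinarith
  have hTnonneg : 0 ≤ T := by
    apply mul_nonneg (by positivity)
    apply Real.log_nonneg
    have : 0 ≤ (c₂/c₁) * Real.sqrt (V 0) := by positivity
    linarith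
  -- main claim: V T = 0
  have hVT : V T = 0 := by
    by_contra hne
    have hVTpos : 0 < V T := lt_of_le_of_ne (hVnonneg T hTnonneg) (Ne.symm hne)
    have hVpos : ∀ t ∈ Set.Icc (0:ℝ) T, 0 < V t := by
      intro t ht
      exact lt_of_lt_of_le hVTpos (hanti ht.1 hTnonneg ht.2)
    set F : ℝ → ℝ := fun t => t + (2/c₂) * Real.log (1 + (c₂/c₁) * Real.sqrt (V t)) with hF
    -- derivative of F at points where V > 0
    have hFd : ∀ t, 0 ≤ t → 0 < V t →
        HasDerivAt F (1 + (2/c₂) * (((c₂/c₁) * (V' t / (2 * Real.sqrt (V t)))) /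
          (1 + (c₂/c₁) * Real.sqrt (V t)))) t := by
      intro t ht hpos
      have hs : 0 < Real.sqrt (V t) := Real.sqrt_pos.mpr hpos
      have hne1 : (1 + (c₂/c₁) * Real.sqrt (V t)) ≠ 0 := by positivity
      have h1 : HasDerivAt (fun y => Real.sqrt (V y)) (V' t / (2 * Real.sqrt (V t))) t :=
        (hderiv t ht).sqrt (ne_of_gt hpos)
      have h2 := ((h1.const_mul (c₂/c₁)).const_add 1).log hne1
      have h3 := h2.const_mul (2/c₂)
      exact (hasDerivAt_id t).add h3
    -- F is antitone on [0, T]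
    have hFanti : AntitoneOn F (Set.Icc 0 T) := by
      apply antitoneOn_of_deriv_nonpos (convex_Icc 0 T)
      · apply ContinuousOn.add continuousOn_id
        apply ContinuousOn.mul continuousOn_const
        apply ContinuousOn.log
        · exact continuousOn_const.add (continuousOn_const.mul
            ((hVcont.mono Set.Icc_subset_Ici_self).sqrt))
        · intro x hx
          have : 0 ≤ (c₂/c₁) * Real.sqrt (V x) := by positivity
          positivity
      · intro x hx
        rw [interior_Icc] at hx
        exact (hFd x hx.1.le (hVpos x ⟨hx.1.le, hx.2.le⟩)).differentiableAt.differentiableWithinAt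
      · intro x hx
        rw [interior_Icc] at hx
        have hpos := hVpos x ⟨hx.1.le, hx.2.le⟩
        rw [(hFd x hx.1.le hpos).deriv]
        set s := Real.sqrt (V x) with hsdef
        have hs : 0 < s := Real.sqrt_pos.mpr hpos
        have hsq : s ^ 2 = V x := Real.sq_sqrt (hVnonneg x hx.1.le)
        have hD : 0 < c₁ * s + c₂ * s ^ 2 := by positivity
        have hkey : (2/c₂) * (((c₂/c₁) * (V' x / (2 * s))) / (1 + (c₂/c₁) * s)) =
            V' x / (c₁ * s + c₂ * s ^ 2) := by
          field_simp
        rw [hkey]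
        have hineq' : V' x ≤ -(c₁ * s + c₂ * s ^ 2) := by
          have h := hineq x hx.1.le
          rw [← hsdef] at h
          nlinarith
        have : V' x / (c₁ * s + c₂ * s ^ 2) ≤ -1 := by
          rw [div_le_iff₀ hD]
          linarith
        linarith
    have hle : F T ≤ F 0 := hFanti ⟨le_refl 0, hTnonneg⟩ ⟨hTnonneg, le_refl T⟩ hTnonneg
    have hF0 : F 0 = T := by simp [hF, hT]
    have hgT : (2/c₂) * Real.log (1 + (c₂/c₁) * Real.sqrt (V T)) ≤ 0 := by
      have h := hle
      rw [hF0] at h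
      simp only [hF] at h
      linarith
    have hlog : Real.log (1 + (c₂/c₁) * Real.sqrt (V T)) ≤ 0 := by
      by_contra h
      push_neg at h
      nlinarith [div_pos (by norm_num : (0:ℝ) < 2) hc₂]
    have hx1 : (0:ℝ) < 1 + (c₂/c₁) * Real.sqrt (V T) := by
      have : 0 ≤ (c₂/c₁) * Real.sqrt (V T) := by positivity
      linarith
    have := (Real.log_nonpos_iff hx1.le).mp hlog
    have hs0 : Real.sqrt (V T) ≤ 0 := by
      have hcc : 0 < c₂/c₁ := by positivity
      nlinarith
    have : Real.sqrt (V T) = 0 := le_antisymm hs0 (Real.sqrt_nonneg _)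
    have : V T ≤ 0 := by
      rwa [Real.sqrt_eq_zero' ] at this
      -- sqrt_eq_zero' : sqrt x = 0 ↔ x ≤ 0
    linarith
  intro t hTt
  have ht0 : 0 ≤ t := le_trans hTnonneg hTt
  have := hanti (Set.mem_Ici.mpr hTnonneg) (Set.mem_Ici.mpr ht0) hTt
  have h0 := hVnonneg t ht0
  rw [hVT] at this
  linarith
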